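/- For every agent a let Φ_a be a finite set of formulas and ψ_a a formula of arrow update model logic. Then the multi-agent reduction axiom ⟨↑⟩⋀_{a∈A}(⋀_{φ∈Φ_a}◇_a φ ∧ □_a ψ_a) ↔ ⋀_{a∈A}⋀_{φ∈Φ_a}◇_a⟨↑⟩(φ ∧ ψ_a) is valid. -/

import Mathlib

namespace AAUML

/-- Formulas of arbitrary arrow update model logic over atoms `P` and agents `A`.
An arrow update model is encoded as a finite list of arrows
`(agent, source outcome, source condition, target outcome, target condition)`,
with outcomes drawn from `ℕ`; `upd U o φ` is `[U,o]φ` and `all φ` is `[↑]φ`. -/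
inductive Form (P A : Type) : Type where
  | atom : P → Form P A
  | neg  : Form P A → Form P A
  | and  : Form P A → Form P A → Form P A
  | box  : A → Form P A → Form P A
  | upd  : List (A × ℕ × Form P A × ℕ × Form P A) → ℕ → Form P A → Form P A
  | all  : Form P A → Form P A

/-- An arrow: agent, source outcome, source condition, target outcome, target condition. -/
abbrev Arrow (P A : Type) := A × ℕ × Form P A × ℕ × Form P A

/-- Formulas of basic multi-agent modal logic: no update modality, no quantifier. -/
inductive Form.Modal {P A : Type} : Form P A → Prop
  | atom (p : P) : Form.Modal (.atom p)
  | neg {φ : Form P A} : Form.Modal φ → Form.Modal (.neg φ)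
  | and {φ ψ : Form P A} : Form.Modal φ → Form.Modal ψ → Form.Modal (.and φ ψ)
  | box (a : A) {φ : Form P A} : Form.Modal φ → Form.Modal (.box a φ)

/-- Formulas of arrow update model logic (no arbitrary-update quantifier anywhere,
including inside the conditions of arrow update models). -/
inductive Form.NoQuant {P A : Type} : Form P A → Prop
  | atom (p : P) : Form.NoQuant (.atom p)
  | neg {φ : Form P A} : Form.NoQuant φ → Form.NoQuant (.neg φ)
  | and {φ ψ : Form P A} : Form.NoQuant φ → Form.NoQuant ψ → Form.NoQuant (.and φ ψ)
  | box (a : A) {φ : Form P A} : Form.NoQuant φ → Form.NoQuant (.box a φ)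
  | upd {U : List (Arrow P A)} (o : ℕ) {φ : Form P A} : Form.NoQuant φ →
      (∀ ar ∈ U, Form.NoQuant ar.2.2.1) → (∀ ar ∈ U, Form.NoQuant ar.2.2.2.2) →
      Form.NoQuant (.upd U o φ)

/-- Propositional formulas (no modalities at all). -/
inductive Form.Prp {P A : Type} : Form P A → Prop
  | atom (p : P) : Form.Prp (.atom p)
  | neg {φ : Form P A} : Form.Prp φ → Form.Prp (.neg φ)
  | and {φ ψ : Form P A} : Form.Prp φ → Form.Prp ψ → Form.Prp (.and φ ψ)

/-- A relational (Kripke) model. -/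
structure KModel (P A : Type) : Type 1 where
  World : Type
  R : A → World → World → Prop
  V : World → P → Prop

variable {P A : Type}

/-- Satisfaction for basic modal formulas (junk value `False` on updates/quantifiers;
only used on modal formulas). -/
def msat (M : KModel P A) : M.World → Form P A → Prop
  | s, .atom p => M.V s p
  | s, .neg φ => ¬ msat M s φ
  | s, .and φ ψ => msat M s φ ∧ msat M s ψ
  | s, .box a φ => ∀ t, M.R a s t → msat M t φ
  | _, .upd _ _ _ => False
  | _, .all _ => False

/-- Some arrow of `U` for agent `a` from outcome `o` to outcome `o'` has its (modal)
source condition true at `s` and its target condition true at `s'`. -/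
def marrowOK (M : KModel P A) (U : List (Arrow P A)) (a : A) (o o' : ℕ)
    (s s' : M.World) : Prop :=
  ∃ ψ ψ', (a, o, ψ, o', ψ') ∈ U ∧ msat M s ψ ∧ msat M s' ψ'

/-- All source and target conditions of `U` are basic modal formulas. -/
def ModalArrows (U : List (Arrow P A)) : Prop :=
  ∀ ar ∈ U, Form.Modal ar.2.2.1 ∧ Form.Modal ar.2.2.2.2

mutual
  /-- Satisfaction `M,s ⊨ φ`.  The case `upd U o φ` is interpreted in the product
  model `M*U` (inlined); `all φ` quantifies over all arrow update models with basic
  modal source and target conditions. -/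
  def Form.sat : (M : KModel P A) → M.World → Form P A → Prop
    | M, s, .atom p => M.V s p
    | M, s, .neg φ => ¬ Form.sat M s φ
    | M, s, .and φ ψ => Form.sat M s φ ∧ Form.sat M s ψ
    | M, s, .box a φ => ∀ t, M.R a s t → Form.sat M t φ
    | M, s, .upd U o φ =>
        Form.sat ⟨M.World × ℕ,
          fun a x y => M.R a x.1 y.1 ∧ satList M U a x.2 y.2 x.1 y.1,
          fun x p => M.V x.1 p⟩ (s, o) φ
    | M, s, .all φ => ∀ (U : List (Arrow P A)) (o : ℕ), ModalArrows U →
        Form.sat ⟨M.World × ℕ,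
          fun a x y => M.R a x.1 y.1 ∧ marrowOK M U a x.2 y.2 x.1 y.1,
          fun x p => M.V x.1 p⟩ (s, o) φ
  termination_by M s φ => sizeOf φ

  /-- Some arrow of the list, for agent `a`, from `o` to `o'`, has its source condition
  true at `s` and its target condition true at `s'`. -/
  def satList : (M : KModel P A) → List (Arrow P A) → A → ℕ → ℕ → M.World → M.World → Prop
    | _, [], _, _, _, _, _ => False
    | M, (b, o1, ψ, o2, ψ') :: rest, a, o, o', s, s' =>
        (b = a ∧ o1 = o ∧ o2 = o' ∧ Form.sat M s ψ ∧ Form.sat M s' ψ') ∨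
        satList M rest a o o' s s'
  termination_by M U a o o' s s' => sizeOf U
end

/-- The product `M*U` of a relational model and an arrow update model. -/
def prodModel (M : KModel P A) (U : List (Arrow P A)) : KModel P A :=
  ⟨M.World × ℕ,
   fun a x y => M.R a x.1 y.1 ∧ satList M U a x.2 y.2 x.1 y.1,
   fun x p => M.V x.1 p⟩

def Valid (φ : Form P A) : Prop := ∀ (M : KModel P A) (s : M.World), Form.sat M s φ

def Form.or (φ ψ : Form P A) : Form P A := .neg (.and (.neg φ) (.neg ψ))
def Form.imp (φ ψ : Form P A) : Form P A := .neg (.and φ (.neg ψ))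
def Form.dia (a : A) (φ : Form P A) : Form P A := .neg (.box a (.neg φ))
/-- `⟨U,o⟩φ` -/
def Form.diaUpd (U : List (Arrow P A)) (o : ℕ) (φ : Form P A) : Form P A :=
  .neg (.upd U o (.neg φ))
/-- `⟨↑⟩φ` -/
def Form.ex (φ : Form P A) : Form P A := .neg (.all (.neg φ))
/-- A canonical tautology. -/
def Form.top [Inhabited P] : Form P A := .neg (.and (.atom default) (.neg (.atom default)))
/-- Finite conjunction. -/
def Form.conj [Inhabited P] : List (Form P A) → Form P A
  | [] => Form.top
  | φ :: rest => .and φ (Form.conj rest)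

/-- `Z` is a bisimulation between `M` and `N`. -/
def IsBisim (M N : KModel P A) (Z : M.World → N.World → Prop) : Prop :=
  ∀ s s', Z s s' →
    (∀ p, M.V s p ↔ N.V s' p) ∧
    (∀ a t, M.R a s t → ∃ t', N.R a s' t' ∧ Z t t') ∧
    (∀ a t', N.R a s' t' → ∃ t, M.R a s t ∧ Z t t')

/-- Bisimilarity of pointed models. -/
def Bisimilar (M : KModel P A) (s : M.World) (N : KModel P A) (s' : N.World) : Prop :=
  ∃ Z, IsBisim M N Z ∧ Z s s'

/-- An action model: actions with accessibility relations and preconditions. -/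
structure AModel (P A : Type) : Type 1 where
  Action : Type
  rel : A → Action → Action → Prop
  pre : Action → Form P A

/-- The restricted modal product `M ⊗ E`. -/
def actProd (M : KModel P A) (E : AModel P A) : KModel P A :=
  ⟨{x : M.World × E.Action // Form.sat M x.1 (E.pre x.2)},
   fun a x y => M.R a x.1.1 y.1.1 ∧ E.rel a x.1.2 y.1.2,
   fun x p => M.V x.1.1 p⟩

/-- `M,s ⊨ [E,e]φ`: if the precondition of `e` holds at `s` then `φ` holds at `(s,e)`
in `M ⊗ E`. -/
def actSat (M : KModel P A) (E : AModel P A) (s : M.World) (e : E.Action)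
    (φ : Form P A) : Prop :=
  ∀ h : Form.sat M s (E.pre e), Form.sat (actProd M E) ⟨(s, e), h⟩ φ


variable {P A : Type}

def mprod (M : KModel P A) (U : List (Arrow P A)) : KModel P A :=
  ⟨M.World × ℕ,
   fun a x y => M.R a x.1 y.1 ∧ marrowOK M U a x.2 y.2 x.1 y.1,
   fun x p => M.V x.1 p⟩

lemma sat_atom (M : KModel P A) (s : M.World) (p : P) :
    Form.sat M s (.atom p) ↔ M.V s p := by simp [Form.sat]
lemma sat_neg (M : KModel P A) (s : M.World) (φ : Form P A) :
    Form.sat M s (.neg φ) ↔ ¬ Form.sat M s φ := by simp [Form.sat]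
lemma sat_and (M : KModel P A) (s : M.World) (φ ψ : Form P A) :
    Form.sat M s (.and φ ψ) ↔ Form.sat M s φ ∧ Form.sat M s ψ := by simp [Form.sat]
lemma sat_box (M : KModel P A) (s : M.World) (a : A) (φ : Form P A) :
    Form.sat M s (.box a φ) ↔ ∀ t, M.R a s t → Form.sat M t φ := by simp [Form.sat]
lemma sat_upd (M : KModel P A) (s : M.World) (U : List (Arrow P A)) (o : ℕ) (φ : Form P A) :
    Form.sat M s (.upd U o φ) ↔ Form.sat (prodModel M U) (s, o) φ := by
  rw [Form.sat]; rfl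
lemma sat_all (M : KModel P A) (s : M.World) (φ : Form P A) :
    Form.sat M s (.all φ) ↔ ∀ (U : List (Arrow P A)) (o : ℕ), ModalArrows U →
      Form.sat (mprod M U) (s, o) φ := by
  rw [Form.sat]; rfl

lemma satList_iff (M : KModel P A) (U : List (Arrow P A)) (a : A) (o o' : ℕ)
    (s s' : M.World) :
    satList M U a o o' s s' ↔
      ∃ src tgt, (a, o, src, o', tgt) ∈ U ∧ Form.sat M s src ∧ Form.sat M s' tgt := by
  induction U with
  | nil => simp [satList]
  | cons ar rest ih =>
    obtain ⟨b, o1, src, o2, tgt⟩ := ar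
    rw [satList, ih]
    constructor
    · rintro (⟨rfl, rfl, rfl, h1, h2⟩ | ⟨src', tgt', hm, h1, h2⟩)
      · exact ⟨src, tgt, List.mem_cons_self, h1, h2⟩
      · exact ⟨src', tgt', List.mem_cons_of_mem _ hm, h1, h2⟩
    · rintro ⟨src', tgt', hm, h1, h2⟩
      rcases List.mem_cons.1 hm with h | h
      · injection h with e1 e2; injection e2 with e2 e3; injection e3 with e3 e4
        injection e4 with e4 e5
        subst e1; subst e2; subst e3; subst e4; subst e5
        exact Or.inl ⟨rfl, rfl, rfl, h1, h2⟩
      · exact Or.inr ⟨src', tgt', h, h1, h2⟩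

lemma modal_msat_iff_sat {φ : Form P A} (h : Form.Modal φ) :
    ∀ (M : KModel P A) (s : M.World), msat M s φ ↔ Form.sat M s φ := by
  induction h with
  | atom p => intro M s; rw [msat, sat_atom]
  | neg _ ih => intro M s; rw [msat, sat_neg, ih]
  | and _ _ ih1 ih2 => intro M s; rw [msat, sat_and, ih1, ih2]
  | box a _ ih => intro M s; rw [msat, sat_box]; exact forall_congr' fun t => by rw [ih]

lemma mprod_eq_prodModel (M : KModel P A) (U : List (Arrow P A)) (h : ModalArrows U) :
    mprod M U = prodModel M U := by
  unfold mprod prodModel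
  congr 1
  funext a x y
  have : marrowOK M U a x.2 y.2 x.1 y.1 ↔ satList M U a x.2 y.2 x.1 y.1 := by
    rw [satList_iff, marrowOK]
    constructor
    · rintro ⟨src, tgt, hm, h1, h2⟩
      exact ⟨src, tgt, hm, (modal_msat_iff_sat (h _ hm).1 M x.1).1 h1,
        (modal_msat_iff_sat (h _ hm).2 M y.1).1 h2⟩
    · rintro ⟨src, tgt, hm, h1, h2⟩
      exact ⟨src, tgt, hm, (modal_msat_iff_sat (h _ hm).1 M x.1).2 h1,
        (modal_msat_iff_sat (h _ hm).2 M y.1).2 h2⟩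
  rw [eq_iff_iff]
  exact and_congr_right fun _ => this

lemma sat_top [Inhabited P] (M : KModel P A) (s : M.World) : Form.sat M s Form.top := by
  rw [Form.top, sat_neg, sat_and, sat_neg]; tauto

lemma msat_top [Inhabited P] (M : KModel P A) (s : M.World) : msat M s Form.top := by
  rw [Form.top, msat, msat]; tauto

lemma modal_top [Inhabited P] : Form.Modal (Form.top : Form P A) :=
  .neg (.and (.atom _) (.neg (.atom _)))

lemma modal_imp {φ ψ : Form P A} (h1 : Form.Modal φ) (h2 : Form.Modal ψ) :
    Form.Modal (φ.imp ψ) := .neg (.and h1 (.neg h2))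

lemma sat_imp (M : KModel P A) (s : M.World) (φ ψ : Form P A) :
    Form.sat M s (φ.imp ψ) ↔ (Form.sat M s φ → Form.sat M s ψ) := by
  rw [Form.imp, sat_neg, sat_and, sat_neg]; tauto

lemma sat_dia (M : KModel P A) (s : M.World) (a : A) (φ : Form P A) :
    Form.sat M s (Form.dia a φ) ↔ ∃ t, M.R a s t ∧ Form.sat M t φ := by
  rw [Form.dia, sat_neg, sat_box]
  push_neg
  exact exists_congr fun t => by rw [sat_neg]; tauto

lemma sat_ex (M : KModel P A) (s : M.World) (φ : Form P A) :
    Form.sat M s (Form.ex φ) ↔ ∃ (U : List (Arrow P A)) (o : ℕ), ModalArrows U ∧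
      Form.sat (mprod M U) (s, o) φ := by
  rw [Form.ex, sat_neg, sat_all]
  push_neg
  refine exists_congr fun U => exists_congr fun o => ?_
  constructor
  · rintro ⟨h1, h2⟩; erw [sat_neg] at h2; exact ⟨h1, not_not.1 h2⟩
  · rintro ⟨h1, h2⟩; exact ⟨h1, by erw [sat_neg]; exact not_not.2 h2⟩

lemma sat_conj [Inhabited P] (M : KModel P A) (s : M.World) (l : List (Form P A)) :
    Form.sat M s (Form.conj l) ↔ ∀ φ ∈ l, Form.sat M s φ := by
  induction l with
  | nil => simpa [Form.conj] using sat_top M s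
  | cons φ rest ih => rw [Form.conj, sat_and, ih]; simp

lemma modal_conj [Inhabited P] {l : List (Form P A)} (h : ∀ φ ∈ l, Form.Modal φ) :
    Form.Modal (Form.conj l) := by
  induction l with
  | nil => exact modal_top
  | cons φ rest ih =>
    exact .and (h _ (List.mem_cons_self)) (ih fun χ hχ => h _ (List.mem_cons_of_mem _ hχ))

lemma msat_bisim {φ : Form P A} (h : Form.Modal φ) :
    ∀ (M N : KModel P A) (Z : M.World → N.World → Prop), IsBisim M N Z →
      ∀ s s', Z s s' → (msat M s φ ↔ msat N s' φ) := by
  induction h with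
  | atom p => intro M N Z hZ s s' hss; rw [msat, msat]; exact (hZ s s' hss).1 p
  | neg _ ih => intro M N Z hZ s s' hss; rw [msat, msat, ih M N Z hZ s s' hss]
  | and _ _ ih1 ih2 =>
    intro M N Z hZ s s' hss
    rw [msat, msat, ih1 M N Z hZ s s' hss, ih2 M N Z hZ s s' hss]
  | box a _ ih =>
    intro M N Z hZ s s' hss
    rw [msat, msat]
    constructor
    · intro h t' ht'
      obtain ⟨t, ht, htt⟩ := (hZ s s' hss).2.2 a t' ht'
      exact (ih M N Z hZ t t' htt).1 (h t ht)
    · intro h t ht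
      obtain ⟨t', ht', htt⟩ := (hZ s s' hss).2.1 a t ht
      exact (ih M N Z hZ t t' htt).2 (h t' ht')

lemma sizeOf_arrow_src {U : List (Arrow P A)} {ar : Arrow P A} (h : ar ∈ U) :
    sizeOf ar.2.2.1 < sizeOf U ∧ sizeOf ar.2.2.2.2 < sizeOf U := by
  have := List.sizeOf_lt_of_mem h
  obtain ⟨b, o1, src, o2, tgt⟩ := ar
  simp only [Prod.mk.sizeOf_spec] at this ⊢
  omega

lemma sizeOf_form_pos (φ : Form P A) : 0 < sizeOf φ := by
  cases φ <;> simp <;> omega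

lemma bisim_sat_aux : ∀ (n : ℕ) (φ : Form P A), sizeOf φ ≤ n →
    ∀ (M N : KModel P A) (Z : M.World → N.World → Prop), IsBisim M N Z →
      ∀ s s', Z s s' → (Form.sat M s φ ↔ Form.sat N s' φ) := by
  intro n
  induction n with
  | zero => intro φ hφ; exact absurd hφ (by have := sizeOf_form_pos φ; omega)
  | succ n ih =>
    intro φ hφ M N Z hZ s s' hss
    cases φ with
    | atom p => rw [sat_atom, sat_atom]; exact (hZ s s' hss).1 p
    | neg χ =>
      rw [sat_neg, sat_neg, ih χ (by simp at hφ; omega) M N Z hZ s s' hss]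
    | and χ1 χ2 =>
      rw [sat_and, sat_and, ih χ1 (by simp at hφ; omega) M N Z hZ s s' hss,
        ih χ2 (by simp at hφ; omega) M N Z hZ s s' hss]
    | box a χ =>
      rw [sat_box, sat_box]
      constructor
      · intro h t' ht'
        obtain ⟨t, ht, htt⟩ := (hZ s s' hss).2.2 a t' ht'
        exact (ih χ (by simp at hφ; omega) M N Z hZ t t' htt).1 (h t ht)
      · intro h t ht
        obtain ⟨t', ht', htt⟩ := (hZ s s' hss).2.1 a t ht
        exact (ih χ (by simp at hφ; omega) M N Z hZ t t' htt).2 (h t' ht')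
    | upd U o χ =>
      have hU : sizeOf U ≤ n := by simp at hφ; omega
      have hcond : ∀ ar ∈ U, ∀ (x : M.World) (y : N.World), Z x y →
          (Form.sat M x ar.2.2.1 ↔ Form.sat N y ar.2.2.1) ∧
          (Form.sat M x ar.2.2.2.2 ↔ Form.sat N y ar.2.2.2.2) := by
        intro ar har x y hxy
        have hs := sizeOf_arrow_src har
        exact ⟨ih ar.2.2.1 (by omega) M N Z hZ x y hxy,
          ih ar.2.2.2.2 (by omega) M N Z hZ x y hxy⟩
      have hlist : ∀ (o1 o2 : ℕ) (a : A) (x : M.World) (y : N.World), Z x y →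
          ∀ (x' : M.World) (y' : N.World), Z x' y' →
          (satList M U a o1 o2 x x' ↔ satList N U a o1 o2 y y') := by
        intro o1 o2 a x y hxy x' y' hxy'
        rw [satList_iff, satList_iff]
        constructor
        · rintro ⟨src, tgt, hm, h1, h2⟩
          exact ⟨src, tgt, hm, ((hcond _ hm x y hxy).1).1 h1,
            ((hcond _ hm x' y' hxy').2).1 h2⟩
        · rintro ⟨src, tgt, hm, h1, h2⟩
          exact ⟨src, tgt, hm, ((hcond _ hm x y hxy).1).2 h1,
            ((hcond _ hm x' y' hxy').2).2 h2⟩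
      rw [sat_upd, sat_upd]
      have hZ' : IsBisim (prodModel M U) (prodModel N U)
          (fun x y => Z x.1 y.1 ∧ x.2 = y.2) := by
        rintro ⟨x, ox⟩ ⟨y, oy⟩ ⟨hxy, (rfl : ox = oy)⟩
        refine ⟨fun p => (hZ x y hxy).1 p, ?_, ?_⟩
        · rintro a ⟨t, ot⟩ ⟨hR, hL⟩
          obtain ⟨t', ht', htt⟩ := (hZ x y hxy).2.1 a t hR
          exact ⟨(t', ot), ⟨ht', (hlist _ _ _ _ _ hxy _ _ htt).1 hL⟩, htt, rfl⟩
        · rintro a ⟨t', ot⟩ ⟨hR, hL⟩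
          obtain ⟨t, ht, htt⟩ := (hZ x y hxy).2.2 a t' hR
          exact ⟨(t, ot), ⟨ht, (hlist _ _ _ _ _ hxy _ _ htt).2 hL⟩, htt, rfl⟩
      exact ih χ (by simp at hφ; omega) _ _ _ hZ' (s, o) (s', o) ⟨hss, rfl⟩
    | all χ =>
      rw [sat_all, sat_all]
      have key : ∀ (U : List (Arrow P A)), ModalArrows U →
          IsBisim (mprod M U) (mprod N U) (fun x y => Z x.1 y.1 ∧ x.2 = y.2) := by
        intro U hU
        have hlist : ∀ (o1 o2 : ℕ) (a : A) (x : M.World) (y : N.World), Z x y →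
            ∀ (x' : M.World) (y' : N.World), Z x' y' →
            (marrowOK M U a o1 o2 x x' ↔ marrowOK N U a o1 o2 y y') := by
          intro o1 o2 a x y hxy x' y' hxy'
          unfold marrowOK
          constructor
          · rintro ⟨src, tgt, hm, h1, h2⟩
            exact ⟨src, tgt, hm, (msat_bisim (hU _ hm).1 M N Z hZ x y hxy).1 h1,
              (msat_bisim (hU _ hm).2 M N Z hZ x' y' hxy').1 h2⟩
          · rintro ⟨src, tgt, hm, h1, h2⟩
            exact ⟨src, tgt, hm, (msat_bisim (hU _ hm).1 M N Z hZ x y hxy).2 h1,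
              (msat_bisim (hU _ hm).2 M N Z hZ x' y' hxy').2 h2⟩
        rintro ⟨x, ox⟩ ⟨y, oy⟩ ⟨hxy, (rfl : ox = oy)⟩
        refine ⟨fun p => (hZ x y hxy).1 p, ?_, ?_⟩
        · rintro a ⟨t, ot⟩ ⟨hR, hL⟩
          obtain ⟨t', ht', htt⟩ := (hZ x y hxy).2.1 a t hR
          exact ⟨(t', ot), ⟨ht', (hlist _ _ _ _ _ hxy _ _ htt).1 hL⟩, htt, rfl⟩
        · rintro a ⟨t', ot⟩ ⟨hR, hL⟩
          obtain ⟨t, ht, htt⟩ := (hZ x y hxy).2.2 a t' hR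
          exact ⟨(t, ot), ⟨ht, (hlist _ _ _ _ _ hxy _ _ htt).2 hL⟩, htt, rfl⟩
      constructor
      · intro h U o hU
        exact (ih χ (by simp at hφ; omega) _ _ _ (key U hU) (s, o) (s', o) ⟨hss, rfl⟩).1
          (h U o hU)
      · intro h U o hU
        exact (ih χ (by simp at hφ; omega) _ _ _ (key U hU) (s, o) (s', o) ⟨hss, rfl⟩).2
          (h U o hU)

lemma bisim_sat (φ : Form P A) (M N : KModel P A) (Z : M.World → N.World → Prop)
    (hZ : IsBisim M N Z) (s : M.World) (s' : N.World) (hss : Z s s') :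
    Form.sat M s φ ↔ Form.sat N s' φ :=
  bisim_sat_aux (sizeOf φ) φ le_rfl M N Z hZ s s' hss

/-- Reduction: `[U,o]χ` with modal `χ` and modal-conditioned `U` is equivalent to a
modal formula. -/
lemma upd_modal_equiv [Inhabited P] {χ : Form P A} (hχ : Form.Modal χ) :
    ∀ (U : List (Arrow P A)), ModalArrows U → ∀ (o : ℕ),
      ∃ χ' : Form P A, Form.Modal χ' ∧
        ∀ (M : KModel P A) (s : M.World),
          Form.sat (prodModel M U) (s, o) χ ↔ Form.sat M s χ' := by
  classical
  induction hχ with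
  | atom p =>
    intro U hU o
    exact ⟨.atom p, .atom p, fun M s => by erw [sat_atom, sat_atom]; exact Iff.rfl⟩
  | neg _ ih =>
    intro U hU o
    obtain ⟨χ', hm, he⟩ := ih U hU o
    exact ⟨.neg χ', .neg hm, fun M s => by erw [sat_neg, sat_neg, he]⟩
  | and _ _ ih1 ih2 =>
    intro U hU o
    obtain ⟨χ1, hm1, he1⟩ := ih1 U hU o
    obtain ⟨χ2, hm2, he2⟩ := ih2 U hU o
    exact ⟨.and χ1 χ2, .and hm1 hm2, fun M s => by erw [sat_and, sat_and, he1, he2]⟩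
  | @box a χ0 _ ih =>
    intro U hU o
    choose e hem hee using ih U hU
    refine ⟨Form.conj (U.filterMap (fun ar =>
      if ar.1 = a ∧ ar.2.1 = o then
        some (ar.2.2.1.imp (.box a (ar.2.2.2.2.imp (e ar.2.2.2.1)))) else none)),
      ?_, ?_⟩
    · refine modal_conj ?_
      intro ξ hξ
      obtain ⟨ar, har, hg⟩ := List.mem_filterMap.1 hξ
      by_cases hc : ar.1 = a ∧ ar.2.1 = o
      · rw [if_pos hc] at hg
        injection hg with hg
        subst hg
        exact modal_imp (hU _ har).1 (.box a (modal_imp (hU _ har).2 (hem _)))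
      · rw [if_neg hc] at hg; exact absurd hg (by simp)
    · intro M s
      erw [sat_conj, sat_box]
      constructor
      · intro h ξ hξ
        obtain ⟨ar, har, hg⟩ := List.mem_filterMap.1 hξ
        by_cases hc : ar.1 = a ∧ ar.2.1 = o
        · rw [if_pos hc] at hg
          injection hg with hg
          subst hg
          rw [sat_imp]
          intro hsrc
          rw [sat_box]
          intro t ht
          rw [sat_imp]
          intro htgt
          rw [← hee ar.2.2.2.1 M t]
          obtain ⟨b, o1, src, o2, tgt⟩ := ar
          obtain ⟨hc1, hc2⟩ := hc
          exact h (t, o2) ⟨ht, (satList_iff M U a o o2 s t).2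
            ⟨src, tgt, by rw [← hc1, ← hc2]; exact har, hsrc, htgt⟩⟩
        · rw [if_neg hc] at hg; exact absurd hg (by simp)
      · rintro h ⟨t, o2⟩ ⟨hR, hL⟩
        obtain ⟨src, tgt, hm, hsrc, htgt⟩ := (satList_iff M U a o o2 s t).1 hL
        have hmem : (src.imp (.box a (tgt.imp (e o2)))) ∈ U.filterMap (fun ar =>
            if ar.1 = a ∧ ar.2.1 = o then
              some (ar.2.2.1.imp (.box a (ar.2.2.2.2.imp (e ar.2.2.2.1)))) else none) := by
          exact List.mem_filterMap.2 ⟨(a, o, src, o2, tgt), hm, by rw [if_pos ⟨rfl, rfl⟩]⟩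
        have := h _ hmem
        rw [sat_imp] at this
        have := this hsrc
        rw [sat_box] at this
        have := this t hR
        rw [sat_imp] at this
        rw [hee o2 M t]
        exact this htgt

lemma conds_replace :
    ∀ (U : List (Arrow P A)),
      (∀ ar ∈ U, ∃ src' : Form P A, Form.Modal src' ∧
        ∀ (M : KModel P A) (s : M.World), Form.sat M s ar.2.2.1 ↔ Form.sat M s src') →
      (∀ ar ∈ U, ∃ tgt' : Form P A, Form.Modal tgt' ∧
        ∀ (M : KModel P A) (s : M.World), Form.sat M s ar.2.2.2.2 ↔ Form.sat M s tgt') →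
      ∃ U' : List (Arrow P A), ModalArrows U' ∧
        ∀ (M : KModel P A) (a : A) (o o' : ℕ) (s t : M.World),
          satList M U a o o' s t ↔ satList M U' a o o' s t := by
  intro U
  induction U with
  | nil => intro _ _; exact ⟨[], fun ar h => absurd h List.not_mem_nil, by
      intro M a o o' s t; rfl⟩
  | cons ar rest ih =>
    intro hsrc htgt
    obtain ⟨rest', hMA, hiff⟩ := ih (fun x hx => hsrc x (List.mem_cons_of_mem _ hx))
      (fun x hx => htgt x (List.mem_cons_of_mem _ hx))
    obtain ⟨src', hms, hes⟩ := hsrc ar (List.mem_cons_self)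
    obtain ⟨tgt', hmt, het⟩ := htgt ar (List.mem_cons_self)
    obtain ⟨b, o1, src, o2, tgt⟩ := ar
    refine ⟨(b, o1, src', o2, tgt') :: rest', ?_, ?_⟩
    · rintro x hx
      rcases List.mem_cons.1 hx with rfl | hx
      · exact ⟨hms, hmt⟩
      · exact hMA x hx
    · intro M a o o' s t
      rw [satList, satList, hiff M a o o' s t, hes M s, het M t]

lemma satList_ext {U U' : List (Arrow P A)}
    (h : ∀ (M : KModel P A) (a : A) (o o' : ℕ) (s t : M.World),
      satList M U a o o' s t ↔ satList M U' a o o' s t) (M : KModel P A)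
    (x : M.World × ℕ) (χ : Form P A) :
    Form.sat (prodModel M U) x χ ↔ Form.sat (prodModel M U') x χ := by
  refine bisim_sat χ (prodModel M U) (prodModel M U') (fun y z => y = z) ?_ x x rfl
  rintro y z rfl
  refine ⟨fun p => Iff.rfl, ?_, ?_⟩
  · rintro a t ⟨hR, hL⟩
    exact ⟨t, ⟨hR, (h M a y.2 t.2 y.1 t.1).1 hL⟩, rfl⟩
  · rintro a t ⟨hR, hL⟩
    exact ⟨t, ⟨hR, (h M a y.2 t.2 y.1 t.1).2 hL⟩, rfl⟩

/-- Every formula of arrow update model logic is equivalent to a basic modal formula. -/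
lemma noquant_modal_equiv [Inhabited P] {φ : Form P A} (h : Form.NoQuant φ) :
    ∃ φ' : Form P A, Form.Modal φ' ∧
      ∀ (M : KModel P A) (s : M.World), Form.sat M s φ ↔ Form.sat M s φ' := by
  induction h with
  | atom p => exact ⟨.atom p, .atom p, fun M s => Iff.rfl⟩
  | neg _ ih =>
    obtain ⟨χ', hm, he⟩ := ih
    exact ⟨.neg χ', .neg hm, fun M s => by rw [sat_neg, sat_neg, he]⟩
  | and _ _ ih1 ih2 =>
    obtain ⟨χ1, hm1, he1⟩ := ih1
    obtain ⟨χ2, hm2, he2⟩ := ih2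
    exact ⟨.and χ1 χ2, .and hm1 hm2, fun M s => by rw [sat_and, sat_and, he1, he2]⟩
  | box a _ ih =>
    obtain ⟨χ', hm, he⟩ := ih
    refine ⟨.box a χ', .box a hm, fun M s => ?_⟩
    rw [sat_box, sat_box]
    exact forall_congr' fun t => imp_congr Iff.rfl (he M t)
  | @upd U o χ _ _ _ ihχ ihsrc ihtgt =>
    obtain ⟨U', hMA, hiff⟩ := conds_replace U (fun ar har => ihsrc ar har)
      (fun ar har => ihtgt ar har)
    obtain ⟨χ1, hmχ, heχ⟩ := ihχ
    obtain ⟨φ', hmφ, heφ⟩ := upd_modal_equiv hmχ U' hMA o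
    refine ⟨φ', hmφ, fun M s => ?_⟩
    rw [sat_upd, satList_ext hiff M (s, o) χ, ← heφ M s]
    exact heχ (prodModel M U') (s, o)

lemma mprod_sat {U : List (Arrow P A)} (h : ModalArrows U) (M : KModel P A)
    (x : M.World × ℕ) (χ : Form P A) :
    Form.sat (mprod M U) x χ ↔ Form.sat (prodModel M U) x χ := by
  refine bisim_sat χ (mprod M U) (prodModel M U) (fun y z => y = z) ?_ x x rfl
  have key : ∀ (a : A) (o o' : ℕ) (y z : M.World),
      marrowOK M U a o o' y z ↔ satList M U a o o' y z := by
    intro a o o' y z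
    rw [satList_iff, marrowOK]
    constructor
    · rintro ⟨src, tgt, hm, h1, h2⟩
      exact ⟨src, tgt, hm, (modal_msat_iff_sat (h _ hm).1 M y).1 h1,
        (modal_msat_iff_sat (h _ hm).2 M z).1 h2⟩
    · rintro ⟨src, tgt, hm, h1, h2⟩
      exact ⟨src, tgt, hm, (modal_msat_iff_sat (h _ hm).1 M y).2 h1,
        (modal_msat_iff_sat (h _ hm).2 M z).2 h2⟩
  rintro y z rfl
  refine ⟨fun p => Iff.rfl, ?_, ?_⟩
  · rintro a t ⟨hR, hL⟩
    exact ⟨t, ⟨hR, (key a y.2 t.2 y.1 t.1).1 hL⟩, rfl⟩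
  · rintro a t ⟨hR, hL⟩
    exact ⟨t, ⟨hR, (key a y.2 t.2 y.1 t.1).2 hL⟩, rfl⟩

lemma modal_noquant {φ : Form P A} (h : Form.Modal φ) : Form.NoQuant φ := by
  induction h with
  | atom p => exact .atom p
  | neg _ ih => exact .neg ih
  | and _ _ ih1 ih2 => exact .and ih1 ih2
  | box a _ ih => exact .box a ih

/-- the multi-agent main reduction axiom:
`⟨↑⟩⋀_{a∈A}(⋀_{φ∈Φ_a}◇_a φ ∧ □_a ψ_a) ↔ ⋀_{a∈A}⋀_{φ∈Φ_a}◇_a⟨↑⟩(φ ∧ ψ_a)` is valid,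
where each `Φ_a` is a finite set of formulas and each `ψ_a` a formula of arrow
update model logic, and `A` is the finite set of agents. -/
theorem ex_main_reduction (P A : Type) [Inhabited P] [Fintype A]
    (Φ : A → List (Form P A)) (ψ : A → Form P A)
    (hΦ : ∀ a : A, ∀ φ ∈ Φ a, φ.NoQuant) (hψ : ∀ a : A, (ψ a).NoQuant) :
    ∀ (M : KModel P A) (s : M.World),
      Form.sat M s (Form.ex (Form.conj ((Finset.univ : Finset A).toList.map
          (fun a => Form.and (Form.conj ((Φ a).map (Form.dia a))) (.box a (ψ a)))))) ↔
        Form.sat M s (Form.conj ((Finset.univ : Finset A).toList.map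
          (fun a => Form.conj ((Φ a).map
            (fun φ => Form.dia a (Form.ex (.and φ (ψ a)))))))) := by
  classical
  intro M s
  constructor
  · -- easy direction
    rw [sat_ex]
    rintro ⟨U, o, hMA, hsat⟩
    erw [sat_conj] at hsat ⊢
    intro ξ hξ
    obtain ⟨a, _, rfl⟩ := List.mem_map.1 hξ
    rw [sat_conj]
    intro ξ' hξ'
    obtain ⟨φ, hφ, rfl⟩ := List.mem_map.1 hξ'
    have ha : (Form.and (Form.conj ((Φ a).map (Form.dia a))) (.box a (ψ a))) ∈
        ((Finset.univ : Finset A).toList.map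
          (fun a => Form.and (Form.conj ((Φ a).map (Form.dia a))) (.box a (ψ a)))) :=
      List.mem_map.2 ⟨a, by simp, rfl⟩
    have := hsat _ ha
    erw [sat_and, sat_conj, sat_box] at this
    obtain ⟨hdia, hbox⟩ := this
    have hdφ := hdia _ (List.mem_map.2 ⟨φ, hφ, rfl⟩)
    erw [sat_dia] at hdφ
    obtain ⟨⟨t, o'⟩, ⟨hR, hok⟩, hφt⟩ := hdφ
    rw [sat_dia]
    refine ⟨t, hR, ?_⟩
    rw [sat_ex]
    refine ⟨U, o', hMA, ?_⟩
    erw [sat_and]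
    exact ⟨hφt, hbox (t, o') ⟨hR, hok⟩⟩
  · -- hard direction
    intro hR
    rw [sat_conj] at hR
    set L := (Finset.univ : Finset A).toList.flatMap
      (fun a => (Φ a).map (fun φ => ((a, φ) : A × Form P A))) with hL
    have hmemL' : ∀ pr ∈ L, pr.2 ∈ Φ pr.1 := by
      rw [hL]
      intro pr hpr
      obtain ⟨a, _, hm⟩ := List.mem_flatMap.1 hpr
      obtain ⟨φ, hφ, heq⟩ := List.mem_map.1 hm
      rw [← heq]
      exact hφ
    have hmemL : ∀ i : Fin L.length, (L.get i).2 ∈ Φ (L.get i).1 :=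
      fun i => hmemL' _ (L.get_mem _)
    have hw : ∀ i : Fin L.length, ∃ t, M.R (L.get i).1 s t ∧
        ∃ (V : List (Arrow P A)) (o : ℕ), ModalArrows V ∧
          Form.sat (mprod M V) (t, o) (((L.get i).2).and (ψ (L.get i).1)) := by
      intro i
      have h1 := hR _ (List.mem_map.2 ⟨(L.get i).1, by simp, rfl⟩)
      rw [sat_conj] at h1
      have h2 := h1 _ (List.mem_map.2 ⟨(L.get i).2, hmemL i, rfl⟩)
      rw [sat_dia] at h2
      obtain ⟨t, hRt, h3⟩ := h2
      rw [sat_ex] at h3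
      obtain ⟨V, o, hMA, hs⟩ := h3
      exact ⟨t, hRt, V, o, hMA, hs⟩
    choose t hRt U o hMA hsat using hw
    have htr : ∀ i : Fin L.length, ∃ θ : Form P A, Form.Modal θ ∧
        ∀ (N : KModel P A) (u : N.World),
          Form.sat N u (.upd (U i) (o i) (((L.get i).2).and (ψ (L.get i).1))) ↔
            Form.sat N u θ := by
      intro i
      apply noquant_modal_equiv
      exact Form.NoQuant.upd (o i) (.and (hΦ _ _ (hmemL i)) (hψ _))
        (fun ar har => modal_noquant (hMA i ar har).1)
        (fun ar har => modal_noquant (hMA i ar har).2)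
    choose θ hθm hθe using htr
    have hkey : ∀ (i : Fin L.length) (u : M.World), msat M u (θ i) ↔
        Form.sat (mprod M (U i)) (u, o i) (((L.get i).2).and (ψ (L.get i).1)) := by
      intro i u
      erw [modal_msat_iff_sat (hθm i), ← hθe i M u, sat_upd, mprod_sat (hMA i)]
    set rn : Fin L.length → ℕ → ℕ := fun i k => Nat.pair i.val k + 1 with hrn
    have hrninj : ∀ i j k l, rn i k = rn j l → i = j ∧ k = l := by
      intro i j k l h
      rw [hrn] at h
      simp only [Nat.add_right_cancel_iff] at h
      rw [Nat.pair_eq_pair] at h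
      exact ⟨Fin.ext h.1, h.2⟩
    have hrnpos : ∀ i k, rn i k ≠ 0 := by intro i k; rw [hrn]; simp
    set Uc : List (Arrow P A) :=
      ((List.finRange L.length).flatMap fun i => (U i).map fun ar =>
        (ar.1, rn i ar.2.1, ar.2.2.1, rn i ar.2.2.2.1, ar.2.2.2.2)) ++
      ((List.finRange L.length).map fun i =>
        ((L.get i).1, 0, Form.top, rn i (o i), θ i)) with hUc
    have hmemUc : ∀ ar ∈ Uc, (∃ i, ∃ ar0 ∈ U i,
        ar = (ar0.1, rn i ar0.2.1, ar0.2.2.1, rn i ar0.2.2.2.1, ar0.2.2.2.2)) ∨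
        (∃ i, ar = ((L.get i).1, 0, Form.top, rn i (o i), θ i)) := by
      intro ar har
      rw [hUc] at har
      rcases List.mem_append.1 har with h | h
      · obtain ⟨i, _, h⟩ := List.mem_flatMap.1 h
        obtain ⟨ar0, h0, heq⟩ := List.mem_map.1 h
        exact Or.inl ⟨i, ar0, h0, heq.symm⟩
      · obtain ⟨i, _, heq⟩ := List.mem_map.1 h
        exact Or.inr ⟨i, heq.symm⟩
    have hcopyUc : ∀ (i : Fin L.length), ∀ ar0 ∈ U i,
        (ar0.1, rn i ar0.2.1, ar0.2.2.1, rn i ar0.2.2.2.1, ar0.2.2.2.2) ∈ Uc := by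
      intro i ar0 h0
      rw [hUc]
      exact List.mem_append.2 (Or.inl (List.mem_flatMap.2
        ⟨i, List.mem_finRange i, List.mem_map.2 ⟨ar0, h0, rfl⟩⟩))
    have hfreshUc : ∀ (i : Fin L.length),
        ((L.get i).1, 0, Form.top, rn i (o i), θ i) ∈ Uc := by
      intro i
      rw [hUc]
      exact List.mem_append.2 (Or.inr (List.mem_map.2 ⟨i, List.mem_finRange i, rfl⟩))
    have hMAc : ModalArrows Uc := by
      intro ar har
      rcases hmemUc ar har with ⟨i, ar0, h0, rfl⟩ | ⟨i, rfl⟩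
      · exact ⟨(hMA i ar0 h0).1, (hMA i ar0 h0).2⟩
      · exact ⟨modal_top, hθm i⟩
    have hbis : ∀ i : Fin L.length, IsBisim (mprod M Uc) (mprod M (U i))
        (fun x y => x.1 = y.1 ∧ x.2 = rn i y.2) := by
      intro i
      rintro ⟨x1, x2⟩ ⟨y1, y2⟩ ⟨(rfl : x1 = y1), (rfl : x2 = rn i y2)⟩
      refine ⟨fun p => Iff.rfl, ?_, ?_⟩
      · rintro a ⟨u1, u2⟩ ⟨hRa, hok⟩
        obtain ⟨src, tgt, hm, h1, h2⟩ := hok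
        rcases hmemUc _ hm with ⟨j, ar0, h0, heq⟩ | ⟨j, heq⟩
        · obtain ⟨b, k1, src0, k2, tgt0⟩ := ar0
          simp only [Prod.mk.injEq] at heq
          obtain ⟨rfl, he2, rfl, he4, rfl⟩ := heq
          obtain ⟨rfl, rfl⟩ := hrninj _ _ _ _ he2
          refine ⟨(u1, k2), ⟨hRa, src, tgt, h0, h1, h2⟩, rfl, he4⟩
        · simp only [Prod.mk.injEq] at heq
          exact absurd heq.2.1 (hrnpos i y2)
      · rintro a ⟨u1, u2⟩ ⟨hRa, hok⟩
        obtain ⟨src, tgt, hm, h1, h2⟩ := hok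
        exact ⟨(u1, rn i u2), ⟨hRa, src, tgt,
          hcopyUc i (a, y2, src, u2, tgt) hm, h1, h2⟩, rfl, rfl⟩
    rw [sat_ex]
    refine ⟨Uc, 0, hMAc, ?_⟩
    erw [sat_conj]
    intro ξ hξ
    obtain ⟨a, _, rfl⟩ := List.mem_map.1 hξ
    erw [sat_and]
    constructor
    · erw [sat_conj]
      intro ξ' hξ'
      obtain ⟨φ, hφ, rfl⟩ := List.mem_map.1 hξ'
      have hmem : ((a, φ) : A × Form P A) ∈ L := by
        rw [hL]
        exact List.mem_flatMap.2 ⟨a, by simp, List.mem_map.2 ⟨φ, hφ, rfl⟩⟩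
      obtain ⟨i, hi⟩ := List.mem_iff_get.1 hmem
      have hai : (L.get i).1 = a := by rw [hi]
      have hφi : (L.get i).2 = φ := by rw [hi]
      erw [sat_dia]
      refine ⟨(t i, rn i (o i)), ⟨?_, ?_⟩, ?_⟩
      · rw [← hai]; exact hRt i
      · refine ⟨Form.top, θ i, ?_, msat_top M s, (hkey i (t i)).2 (hsat i)⟩
        rw [← hai]
        exact hfreshUc i
      · refine (bisim_sat φ _ _ _ (hbis i) (t i, rn i (o i)) (t i, o i) ⟨rfl, rfl⟩).2 ?_
        have hs := hsat i
        erw [sat_and] at hs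
        rw [← hφi]
        exact hs.1
    · erw [sat_box]
      rintro ⟨u1, u2⟩ ⟨hRa, hok⟩
      obtain ⟨src, tgt, hm, h1, h2⟩ := hok
      rcases hmemUc _ hm with ⟨j, ar0, h0, heq⟩ | ⟨j, heq⟩
      · obtain ⟨b, k1, src0, k2, tgt0⟩ := ar0
        simp only [Prod.mk.injEq] at heq
        exact absurd heq.2.1.symm (hrnpos j k1)
      · simp only [Prod.mk.injEq] at heq
        obtain ⟨ha, -, -, hu2, ht⟩ := heq
        subst ht
        have hs := (hkey j u1).1 h2
        erw [sat_and] at hs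
        refine (bisim_sat (ψ a) _ _ _ (hbis j) (u1, u2) (u1, o j) ⟨rfl, hu2⟩).2 ?_
        rw [ha]
        exact hs.2

end AAUML
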